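/- Consider m parallel links with affine latencies ℓᵢ(x) = aᵢ·x + bᵢ (aᵢ, bᵢ ≥ 0), and let f* be a flow for rate r̄ such that all links i with fᵢ* > 0 have equal marginal cost 2aᵢfᵢ* + bᵢ. Let k be a used link attaining the maximum latency L = max over used i of ℓᵢ(fᵢ*). Then for every used link i, ℓᵢ(fᵢ*) ≥ L − b_k/2 ≥ L/2. -/
import Mathlib

/-- m parallel links with affine latencies ℓᵢ(x) = aᵢx + bᵢ (aᵢ, bᵢ ≥ 0), and a flow f*
for rate rbar with equal marginal costs 2aᵢfᵢ* + bᵢ = μ on used links. If k is a used link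
attaining the maximum latency L over used links, then every used link i has latency
ℓᵢ(fᵢ*) ≥ L − b_k/2 ≥ L/2. -/
theorem stmt6 (m : ℕ) (a b f : Fin m → ℝ) (rbar : ℝ)
    (ha : ∀ i, 0 ≤ a i) (hb : ∀ i, 0 ≤ b i) (hf : ∀ i, 0 ≤ f i)
    (hsum : ∑ i, f i = rbar)
    (μ : ℝ) (hμ : ∀ i, 0 < f i → 2 * a i * f i + b i = μ)
    (k : Fin m) (hk : 0 < f k) (L : ℝ)
    (hL : L = a k * f k + b k)
    (hmax : ∀ i, 0 < f i → a i * f i + b i ≤ L) :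
    ∀ i, 0 < f i → (L - b k / 2 ≤ a i * f i + b i ∧ L / 2 ≤ L - b k / 2) := by
  intro i hi
  have h1 := hμ i hi
  have h2 := hμ k hk
  constructor
  · nlinarith [hb i]
  · nlinarith [mul_nonneg (ha k) (hf k)]
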